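/- arXiv:2003.14018 — 2 statements merged into one kernel-verified Lean document; each statement's English description precedes it below -/
import Mathlib

section
/- For the theta time-stepping scheme applied to the scalar ODE u' = λu with step size k, the choice θ = 1/2 + ck (for a constant c > 0) yields a method that is second-order accurate: the local truncation error after one step satisfies |u(k) - u_1| ≤ C k^3 for the exact solution u(t) = e^{λt} u_0, where u_1 = u_0 (1 + k(1-θ)λ)/(1 - kθλ). -/
set_option maxHeartbeats 1000000 in
/-- The theta scheme with θ = 1/2 + ck applied to u' = λu is second-order
accurate: the local truncation error after one step is O(k³). -/
theorem theta_scheme_second_order (lam c u0 : ℝ) (hc : 0 < c) :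
    ∃ C k0 : ℝ, 0 < C ∧ 0 < k0 ∧ ∀ k : ℝ, 0 < k → k ≤ k0 →
      (1 - k * (1/2 + c*k) * lam ≠ 0 ∧
       |Real.exp (lam * k) * u0 -
         u0 * (1 + k * (1 - (1/2 + c*k)) * lam) / (1 - k * (1/2 + c*k) * lam)|
         ≤ C * k^3) := by
  refine ⟨2*(|u0|+1)*(3*|lam|^3 + c*lam^2 + 1),
    min (1/(2*c)) (1/(2*(|lam|+1))), by positivity, by positivity, ?_⟩
  intro k hk hk0
  have hL : (0:ℝ) ≤ |lam| := abs_nonneg _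
  have hck : c * k ≤ 1/2 := by
    have h1 := le_trans hk0 (min_le_left _ _)
    have h2 : c * (1/(2*c)) = 1/2 := by field_simp
    nlinarith
  have hxk : |lam| * k ≤ 1/2 := by
    have h1 := le_trans hk0 (min_le_right _ _)
    have hp : (0:ℝ) < |lam| + 1 := by positivity
    have h2 : (|lam|+1) * (1/(2*(|lam|+1))) = 1/2 := by field_simp
    nlinarith
  have hx : |lam * k| ≤ 1/2 := by
    rw [abs_mul, abs_of_pos hk]; exact hxk
  -- denominator bound
  have hDabs : |k * (1/2 + c*k) * lam| ≤ 1/2 := by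
    rw [abs_mul, abs_mul, abs_of_pos hk, abs_of_pos (by positivity : (0:ℝ) < 1/2 + c*k)]
    nlinarith [mul_le_mul hck hxk (mul_nonneg hL hk.le) (by linarith : (0:ℝ) ≤ 1/2)]
  have hD : 1/2 ≤ 1 - k * (1/2 + c*k) * lam := by
    have h := abs_le.mp hDabs
    linarith [h.1, h.2]
  have hDpos : 0 < 1 - k * (1/2 + c*k) * lam := by linarith
  refine ⟨ne_of_gt hDpos, ?_⟩
  have hDub : |1 - k * (1/2 + c*k) * lam| ≤ 3/2 := by
    rw [abs_of_pos hDpos]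
    have h := abs_le.mp hDabs
    linarith [h.1, h.2]
  -- Taylor remainder
  set x := lam * k with hxdef
  set r := Real.exp x - (1 + x + x^2/2) with hrdef
  have hr : |r| ≤ |x|^3 := by
    have hb := Real.exp_bound (x := x) (by linarith : |x| ≤ 1) (by norm_num : 0 < 3)
    have hsum : ∑ i ∈ Finset.range 3, x ^ i / (Nat.factorial i : ℝ) = 1 + x + x^2/2 := by
      simp [Finset.sum_range_succ, Nat.factorial]
    rw [hsum] at hb
    calc |r| ≤ |x|^3 * ((3:ℕ).succ / ((Nat.factorial 3 : ℝ) * 3)) := hb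
      _ ≤ |x|^3 := by
          have : ((3:ℕ).succ / ((Nat.factorial 3 : ℝ) * 3)) = 2/9 := by
            norm_num [Nat.factorial]
          rw [this]
          nlinarith [abs_nonneg x, pow_nonneg (abs_nonneg x) 3]
  have hexp : Real.exp (lam * k) = 1 + x + x^2/2 + r := by
    rw [hrdef]; ring
  -- rewrite expression
  have hkey : Real.exp (lam * k) * u0 -
      u0 * (1 + k * (1 - (1/2 + c*k)) * lam) / (1 - k * (1/2 + c*k) * lam)
      = u0 * (Real.exp (lam * k) * (1 - k * (1/2 + c*k) * lam)
          - (1 + k * (1 - (1/2 + c*k)) * lam)) / (1 - k * (1/2 + c*k) * lam) := by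
    have hDne : (1 - k * (1/2 + c*k) * lam) ≠ 0 := ne_of_gt hDpos
    have hDne2 : (2 - k * (1 + c*k*2) * lam) ≠ 0 := by
      intro h; apply hDne; linarith
    rw [eq_div_iff hDne, sub_mul, div_mul_cancel₀ _ hDne]
    ring
  rw [hkey]
  -- numerator identity
  have hN : Real.exp (lam * k) * (1 - k * (1/2 + c*k) * lam)
      - (1 + k * (1 - (1/2 + c*k)) * lam)
      = r * (1 - k * (1/2 + c*k) * lam) - x^3/4 - c*k*x^2 - c*k*x^3/2 := by
    rw [hexp, hxdef]; ring
  rw [hN]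
  -- bounds
  have hx3 : |x|^3 = |lam|^3 * k^3 := by
    rw [abs_mul, abs_of_pos hk]; ring
  have hNbound : |r * (1 - k * (1/2 + c*k) * lam) - x^3/4 - c*k*x^2 - c*k*x^3/2|
      ≤ k^3 * (2*|lam|^3 + c*lam^2) := by
    have h1 : |r * (1 - k * (1/2 + c*k) * lam)| ≤ (3/2) * (|lam|^3 * k^3) := by
      rw [abs_mul]
      calc |r| * |1 - k * (1/2 + c*k) * lam| ≤ |x|^3 * (3/2) := by
            apply mul_le_mul hr hDub (abs_nonneg _) (by positivity)
        _ = (3/2) * (|lam|^3 * k^3) := by rw [hx3]; ring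
    have h2 : |x^3/4| ≤ |lam|^3 * k^3 / 4 := by
      rw [abs_div, abs_pow, hx3]; norm_num
    have h3 : |c*k*x^2| = c * lam^2 * k^3 := by
      rw [abs_mul, abs_mul, abs_pow, sq_abs, abs_of_pos hc, abs_of_pos hk, hxdef]
      ring
    have h4 : |c*k*x^3/2| ≤ |lam|^3 * k^3 / 4 := by
      rw [abs_div, abs_mul, abs_mul, abs_pow, abs_of_pos hc, abs_of_pos hk, hx3]
      rw [abs_of_pos (by norm_num : (0:ℝ) < 2)]
      have hk3 : (0:ℝ) ≤ |lam|^3 * k^3 := by positivity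
      have := mul_le_mul_of_nonneg_right hck hk3
      linarith
    calc |r * (1 - k * (1/2 + c*k) * lam) - x^3/4 - c*k*x^2 - c*k*x^3/2|
        ≤ |r * (1 - k * (1/2 + c*k) * lam)| + |x^3/4| + |c*k*x^2| + |c*k*x^3/2| := by
          simp only [sub_eq_add_neg]
          calc _ ≤ |r * (1 - k * (1/2 + c*k) * lam) + -(x^3/4) + -(c*k*x^2)| + |c*k*x^3/2| := by
                rw [← abs_neg (c*k*x^3/2)]; exact abs_add_le _ _
            _ ≤ |r * (1 - k * (1/2 + c*k) * lam) + -(x^3/4)| + |c*k*x^2| + |c*k*x^3/2| := by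
                rw [← abs_neg (c*k*x^2)]; linarith [abs_add_le (r * (1 - k * (1/2 + c*k) * lam) + -(x^3/4)) (-(c*k*x^2))]
            _ ≤ |r * (1 - k * (1/2 + c*k) * lam)| + |x^3/4| + |c*k*x^2| + |c*k*x^3/2| := by
                rw [← abs_neg (x^3/4)]; linarith [abs_add_le (r * (1 - k * (1/2 + c*k) * lam)) (-(x^3/4))]
      _ ≤ k^3 * (2*|lam|^3 + c*lam^2) := by
          rw [h3]; linarith
  rw [abs_div, abs_mul, abs_of_pos hDpos]
  rw [div_le_iff₀ hDpos]
  have hu0 : (0:ℝ) ≤ |u0| := abs_nonneg _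
  have hNnn : (0:ℝ) ≤ |r * (1 - k * (1/2 + c*k) * lam) - x^3/4 - c*k*x^2 - c*k*x^3/2| :=
    abs_nonneg _
  have hk3 : (0:ℝ) < k^3 := by positivity
  have hstep1 : |u0| * |r * (1 - k * (1/2 + c*k) * lam) - x^3/4 - c*k*x^2 - c*k*x^3/2|
      ≤ |u0| * (k^3 * (2*|lam|^3 + c*lam^2)) :=
    mul_le_mul_of_nonneg_left hNbound hu0
  have hstep2 : |u0| * (k^3 * (2*|lam|^3 + c*lam^2))
      ≤ (|u0|+1) * (3*|lam|^3 + c*lam^2 + 1) * k^3 := by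
    linarith [mul_nonneg hk3.le (mul_nonneg hu0 (by positivity : (0:ℝ) ≤ |lam|^3 + 1)),
      mul_nonneg hk3.le (by positivity : (0:ℝ) ≤ 3*|lam|^3 + c*lam^2 + 1)]
  have hstep3 : (|u0|+1) * (3*|lam|^3 + c*lam^2 + 1) * k^3
      ≤ 2*(|u0|+1)*(3*|lam|^3 + c*lam^2 + 1) * k^3 * (1 - k * (1/2 + c*k) * lam) := by
    have hA : (0:ℝ) ≤ 2*((|u0|+1)*(3*|lam|^3 + c*lam^2 + 1))*k^3 := by positivity
    have h := mul_le_mul_of_nonneg_left hD hA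
    calc (|u0|+1) * (3*|lam|^3 + c*lam^2 + 1) * k^3
        = 2*((|u0|+1)*(3*|lam|^3 + c*lam^2 + 1))*k^3 * (1/2) := by ring
      _ ≤ 2*((|u0|+1)*(3*|lam|^3 + c*lam^2 + 1))*k^3 * (1 - k * (1/2 + c*k) * lam) := h
      _ = 2*(|u0|+1)*(3*|lam|^3 + c*lam^2 + 1) * k^3 * (1 - k * (1/2 + c*k) * lam) := by
          ring
  exact le_trans hstep1 (le_trans hstep2 hstep3)
end

section
/- For the rotated test function ψ^θ(t) = 1 + (6θ-3)(2t - t_{n-1} - t_n)/k_n on I_n = [t_{n-1}, t_n], the quadrature rule ∫_{I_n} f ψ^θ dt ≈ k_n θ f(t_n) + k_n (1-θ) f(t_{n-1}) has error bounded by C k_n^2 ‖f''‖_{L^1(I_n)} for f ∈ C^2(I_n), with a constant C independent of f, θ ∈ [0,1], and k_n. -/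
open intervalIntegral MeasureTheory

private lemma auxineq (k I θ : ℝ) (hk : 0 < k) (hθ0 : 0 ≤ θ) (hθ1 : θ ≤ 1) (hI : 0 ≤ I) :
    (k*I*4)*k + k*θ*(k*I) ≤ 5*k^2*I := by nlinarith [mul_nonneg (mul_nonneg hk.le hk.le) hI]

private lemma contII {g : ℝ → ℝ} (hg : Continuous g) (a b : ℝ) :
    IntervalIntegrable g MeasureTheory.volume a b := hg.intervalIntegrable a b

/-- Quadrature error of the theta rule for the weighted integral
∫ f ψ^θ dt is bounded by C k_n² ‖f''‖_{L¹(I_n)}, with C independent of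
f, θ ∈ [0,1] and the step size. -/
theorem theta_quadrature_error :
    ∃ C : ℝ, 0 < C ∧ ∀ θ : ℝ, 0 ≤ θ → θ ≤ 1 → ∀ t0 t1 : ℝ, t0 < t1 →
      ∀ f : ℝ → ℝ, ContDiff ℝ 2 f →
      |(∫ t in t0..t1, f t * (1 + (6*θ - 3) * (2*t - t0 - t1) / (t1 - t0)))
          - ((t1 - t0) * θ * f t1 + (t1 - t0) * (1 - θ) * f t0)|
        ≤ C * (t1 - t0)^2 * ∫ t in t0..t1, |deriv (deriv f) t| := by
  refine ⟨5, by norm_num, ?_⟩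
  intro θ hθ0 hθ1 t0 t1 hlt f hf
  have hkpos : (0:ℝ) < t1 - t0 := sub_pos.mpr hlt
  have hkne : t1 - t0 ≠ 0 := ne_of_gt hkpos
  -- smoothness facts
  have hf1 : ContDiff ℝ 1 (deriv f) := (contDiff_succ_iff_deriv.mp (by exact_mod_cast hf)).2.2
  have hcf : Continuous f := hf.continuous
  have hdf : Differentiable ℝ f := hf.differentiable (by norm_num)
  have hdf1 : Differentiable ℝ (deriv f) := hf1.differentiable (by norm_num)
  have hcf2 : Continuous (deriv (deriv f)) := hf1.continuous_deriv le_rfl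
  have hcf1 : Continuous (deriv f) := hdf1.continuous
  set ψ : ℝ → ℝ := fun t => 1 + (6*θ - 3) * (2*t - t0 - t1) / (t1 - t0) with hψ
  have hcψ : Continuous ψ := by
    rw [hψ]; exact continuous_const.add ((continuous_const.mul (by continuity)).div_const _)
  set R : ℝ → ℝ := fun t => f t - f t0 - (t - t0) * deriv f t0 with hRdef
  have hcR : Continuous R := by
    rw [hRdef]
    exact (hcf.sub continuous_const).sub ((continuous_id.sub continuous_const).mul continuous_const)
  -- Taylor remainder via FTC
  have hR : ∀ t : ℝ, R t = ∫ s in t0..t, (t - s) * deriv (deriv f) s := by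
    intro t
    have hder : ∀ s ∈ Set.uIcc t0 t, HasDerivAt (fun s => f s + (t - s) * deriv f s)
        ((t - s) * deriv (deriv f) s) s := by
      intro s _
      have h1 : HasDerivAt f (deriv f s) s := (hdf s).hasDerivAt
      have h2 : HasDerivAt (fun s : ℝ => (t - s)) (-1) s := by
        simpa using (hasDerivAt_id s).const_sub t
      have h3 : HasDerivAt (deriv f) (deriv (deriv f) s) s := (hdf1 s).hasDerivAt
      have h4 := h1.add (h2.mul h3)
      convert (show HasDerivAt (fun s => f s + (t - s) * deriv f s) _ s from h4) using 1
      ring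
    have hint : IntervalIntegrable (fun s => (t - s) * deriv (deriv f) s) volume t0 t :=
      contII (by continuity) _ _
    have h5 := intervalIntegral.integral_eq_sub_of_hasDerivAt hder hint
    rw [h5, hRdef]
    ring
  -- polynomial integral
  have key : ∀ A0 A1 A2 : ℝ, (∫ t in t0..t1, (A0 + A1*t + A2*t^2))
      = A0*(t1-t0) + A1*(t1^2-t0^2)/2 + A2*(t1^3-t0^3)/3 := by
    intro A0 A1 A2
    have i0 : IntervalIntegrable (fun _ : ℝ => A0) volume t0 t1 := intervalIntegrable_const
    have i1 : IntervalIntegrable (fun t : ℝ => A1*t) volume t0 t1 := contII (by continuity) _ _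
    have i2 : IntervalIntegrable (fun t : ℝ => A2*t^2) volume t0 t1 := contII (by continuity) _ _
    rw [intervalIntegral.integral_add (i0.add i1) i2, intervalIntegral.integral_add i0 i1,
      intervalIntegral.integral_const, intervalIntegral.integral_const_mul,
      intervalIntegral.integral_const_mul, integral_id, integral_pow]
    push_cast
    rw [smul_eq_mul]
    ring
  -- exactness on linear functions
  have hlin : (∫ t in t0..t1, (f t0 + deriv f t0*(t-t0)) * ψ t)
      = (t1-t0)*θ*(f t0 + deriv f t0*(t1-t0)) + (t1-t0)*(1-θ)*(f t0) := by
    set a := f t0 with ha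
    set b := deriv f t0 with hb
    set c := (6*θ-3)/(t1-t0) with hc
    have hpt : Set.EqOn (fun t => (a + b*(t-t0)) * ψ t)
        (fun t => ((a-b*t0)*(1-c*t0-c*t1)) + ((a-b*t0)*2*c + b*(1-c*t0-c*t1))*t + (2*b*c)*t^2)
        (Set.uIcc t0 t1) := by
      intro t _
      simp only [hψ, hc]
      field_simp
      ring
    rw [intervalIntegral.integral_congr hpt, key _ _ _]
    simp only [hc]
    field_simp
    ring
  -- splitting the integral
  have hIsplit : (∫ t in t0..t1, f t * ψ t)
      = (∫ t in t0..t1, (f t0 + deriv f t0*(t-t0)) * ψ t) + ∫ t in t0..t1, R t * ψ t := by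
    have hfsplit : Set.EqOn (fun t => f t * ψ t)
        (fun t => (f t0 + deriv f t0*(t-t0)) * ψ t + R t * ψ t) (Set.uIcc t0 t1) := by
      intro t _
      simp only [hRdef]
      ring
    rw [intervalIntegral.integral_congr hfsplit,
      intervalIntegral.integral_add (f := fun t => (f t0 + deriv f t0*(t-t0)) * ψ t) (g := fun t => R t * ψ t)
        (contII (((by continuity : Continuous fun t : ℝ => f t0 + deriv f t0*(t-t0))).mul hcψ) _ _)
        (contII (hcR.mul hcψ) _ _)]
  set I := ∫ t in t0..t1, |deriv (deriv f) t| with hI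
  have hI0 : 0 ≤ I := intervalIntegral.integral_nonneg hlt.le (fun u _ => abs_nonneg _)
  clear_value I
  -- bound on R
  have hRb : ∀ t ∈ Set.Icc t0 t1, |R t| ≤ (t1-t0) * I := by
    intro t ht
    rw [hR t]
    have h1 : |∫ s in t0..t, (t-s) * deriv (deriv f) s| ≤ ∫ s in t0..t, |t-s| * |deriv (deriv f) s| := by
      simpa [Real.norm_eq_abs, abs_mul] using
        intervalIntegral.norm_integral_le_integral_norm (μ := volume)
          (f := fun s => (t-s)*deriv (deriv f) s) ht.1
    have h2 : (∫ s in t0..t, |t-s| * |deriv (deriv f) s|)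
        ≤ ∫ s in t0..t, (t1-t0) * |deriv (deriv f) s| := by
      apply intervalIntegral.integral_mono_on ht.1
        (contII (((continuous_const.sub continuous_id).abs.mul hcf2.abs)) _ _)
        (contII (continuous_const.mul hcf2.abs) _ _)
      intro s hs
      simp only [Pi.sub_apply, Pi.mul_apply, Pi.abs_apply, id_eq]
      apply mul_le_mul_of_nonneg_right _ (abs_nonneg _)
      rw [abs_le]
      exact ⟨by linarith [hs.1, hs.2, ht.1, ht.2], by linarith [hs.1, hs.2, ht.1, ht.2]⟩
    have h3 : (∫ s in t0..t, (t1-t0) * |deriv (deriv f) s|)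
        ≤ ∫ s in t0..t1, (t1-t0) * |deriv (deriv f) s| :=
      intervalIntegral.integral_mono_interval le_rfl ht.1 ht.2
        (Filter.Eventually.of_forall (fun s => mul_nonneg hkpos.le (abs_nonneg _)))
        (contII (continuous_const.mul hcf2.abs) _ _)
    have h4 : (∫ s in t0..t1, (t1-t0) * |deriv (deriv f) s|) = (t1-t0) * I := by
      rw [intervalIntegral.integral_const_mul, hI]
    linarith
  -- bound on ψ
  have hψb : ∀ t ∈ Set.Icc t0 t1, |ψ t| ≤ 4 := by
    intro t ht
    have h1 : |6*θ-3| ≤ 3 := abs_le.mpr ⟨by linarith, by linarith⟩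
    have h2 : |2*t-t0-t1| ≤ t1 - t0 := abs_le.mpr ⟨by linarith [ht.1, ht.2], by linarith [ht.1, ht.2]⟩
    have h3 : |(6*θ-3)*(2*t-t0-t1)/(t1-t0)| ≤ 3 := by
      rw [abs_div, abs_mul, abs_of_pos hkpos, div_le_iff₀ hkpos]
      exact mul_le_mul h1 h2 (abs_nonneg _) (by norm_num)
    have h4 : ψ t = 1 + (6*θ-3)*(2*t-t0-t1)/(t1-t0) := by rw [hψ]
    rw [h4]
    have h5 := abs_add_le (1:ℝ) ((6*θ-3)*(2*t-t0-t1)/(t1-t0))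
    rw [abs_one] at h5
    linarith
  -- bound on ∫ R ψ
  have hmain : |∫ t in t0..t1, R t * ψ t| ≤ ((t1-t0)*I*4) * (t1-t0) := by
    have hpt : ∀ x ∈ Set.uIoc t0 t1, ‖R x * ψ x‖ ≤ (t1-t0)*I*4 := by
      intro x hx
      have hx' : x ∈ Set.Icc t0 t1 := Set.Ioc_subset_Icc_self ((Set.uIoc_of_le hlt.le) ▸ hx)
      rw [Real.norm_eq_abs, abs_mul]
      exact mul_le_mul (hRb x hx') (hψb x hx') (abs_nonneg _) (by positivity)
    have h := intervalIntegral.norm_integral_le_of_norm_le_const hpt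
    rw [Real.norm_eq_abs, abs_of_pos hkpos] at h
    exact h
  -- rewrite goal
  have hgoalint : (∫ t in t0..t1, f t * (1 + (6*θ - 3) * (2*t - t0 - t1) / (t1 - t0)))
      = ∫ t in t0..t1, f t * ψ t := by
    apply intervalIntegral.integral_congr
    intro t _
    rw [hψ]
  rw [hgoalint]
  have hE : (∫ t in t0..t1, f t * ψ t) - ((t1-t0)*θ*f t1 + (t1-t0)*(1-θ)*f t0)
      = (∫ t in t0..t1, R t * ψ t) - (t1-t0)*θ*R t1 := by
    rw [hIsplit, hlin]
    have h1 : R t1 = f t1 - f t0 - (t1 - t0)*deriv f t0 := by rw [hRdef]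
    rw [h1]
    ring
  rw [hE]
  have h2 : |(t1-t0)*θ*R t1| ≤ (t1-t0)*θ*((t1-t0)*I) := by
    rw [abs_mul, abs_mul, abs_of_pos hkpos, abs_of_nonneg hθ0]
    exact mul_le_mul_of_nonneg_left (hRb t1 ⟨hlt.le, le_rfl⟩) (mul_nonneg hkpos.le hθ0)
  calc |(∫ t in t0..t1, R t * ψ t) - (t1-t0)*θ*R t1|
      ≤ |∫ t in t0..t1, R t * ψ t| + |(t1-t0)*θ*R t1| := abs_sub _ _
    _ ≤ ((t1-t0)*I*4) * (t1-t0) + (t1-t0)*θ*((t1-t0)*I) := add_le_add hmain h2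
    _ ≤ 5 * (t1-t0)^2 * I := auxineq _ _ _ hkpos hθ0 hθ1 hI0
end
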